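/- Let n ≥ 1 and let G be the fat fan of order n with base xyz, with apex y' and path vertices v_1, …, v_n. Let L be a list assignment with |L(y')| = 5 and |L(v_i)| = 3 for 1 ≤ i ≤ n. Then there exists at most one precoloring of the base xyz that does not extend to an L-coloring of G. -/
import Mathlib


/-- Vertices of the fat fan of order `n`: the base `x, y, z`, the apex `y'`,
and the path vertices `v 0, …, v (n-1)` (written `v_1, …, v_n` in the paper). -/
inductive FFVert (n : ℕ) : Type where
  | x | y | z | apex
  | v (i : Fin n)
deriving DecidableEq

/-- The fat fan of order `n` with base `x y z` and apex `y'`. -/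
def fatFan (n : ℕ) : SimpleGraph (FFVert n) :=
  SimpleGraph.fromEdgeSet (
    {s(FFVert.x, FFVert.y), s(FFVert.y, FFVert.z),
     s(FFVert.x, FFVert.apex), s(FFVert.y, FFVert.apex), s(FFVert.z, FFVert.apex)} ∪
    {e | ∃ i : Fin n, e = s(FFVert.apex, FFVert.v i)} ∪
    {e | ∃ i : Fin n, (i : ℕ) = 0 ∧ e = s(FFVert.x, FFVert.v i)} ∪
    {e | ∃ i j : Fin n, (i : ℕ) + 1 = (j : ℕ) ∧ e = s(FFVert.v i, FFVert.v j)} ∪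
    {e | ∃ i : Fin n, (i : ℕ) = n - 1 ∧ e = s(FFVert.v i, FFVert.z)})

/-- The precoloring of the base `x y z` by the colors `cx, cy, cz` extends to
an `L`-coloring of the fat fan of order `n`. -/
def ExtendsFF {n : ℕ} {α : Type*} (L : FFVert n → Finset α) (cx cy cz : α) : Prop :=
  ∃ ψ : FFVert n → α,
    (∀ u w : FFVert n, (fatFan n).Adj u w → ψ u ≠ ψ w) ∧
    ψ FFVert.x = cx ∧ ψ FFVert.y = cy ∧ ψ FFVert.z = cz ∧
    (∀ w : FFVert n, w ≠ FFVert.x → w ≠ FFVert.y → w ≠ FFVert.z → ψ w ∈ L w)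

section Aux

variable {α : Type*} [DecidableEq α]

lemma FF.pair_card_le (a b : α) : ({a, b} : Finset α).card ≤ 2 :=
  (Finset.card_insert_le _ _).trans (by simp)

lemma FF.sdiff_pair_card (s : Finset α) (a b : α) (h : 3 ≤ s.card) :
    1 ≤ (s \ {a, b}).card := by
  have h1 := Finset.card_sdiff_add_card_inter s ({a, b} : Finset α)
  have h2 : (s ∩ {a, b}).card ≤ ({a, b} : Finset α).card :=
    Finset.card_le_card Finset.inter_subset_right
  have h3 := FF.pair_card_le a b
  omega

/-- Left-to-right greedy coloring of a path with slack at the right end. -/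
lemma FF.pathLR (n : ℕ) (hn : 1 ≤ n) (M : ℕ → Finset α)
    (hM : ∀ i < n, 3 ≤ (M i).card) (c cx cz : α)
    (hslack : 2 ≤ ((M (n-1)) \ {cz, c}).card) :
    ∃ f : ℕ → α, f 0 ≠ cx ∧ f (n-1) ≠ cz ∧
      (∀ i < n, f i ∈ M i ∧ f i ≠ c) ∧
      (∀ i, i + 2 ≤ n → f i ≠ f (i+1)) := by
  rcases eq_or_lt_of_le hn with h1 | h2
  · -- n = 1
    have hn1 : n = 1 := h1.symm
    subst hn1
    norm_num at hslack
    have hne : ((M 0 \ {cz, c}).erase cx).Nonempty := by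
      rw [← Finset.card_pos]
      have := Finset.pred_card_le_card_erase (a := cx) (s := M 0 \ {cz, c})
      omega
    obtain ⟨a, ha⟩ := hne
    rw [Finset.mem_erase, Finset.mem_sdiff, Finset.mem_insert, Finset.mem_singleton] at ha
    push_neg at ha
    refine ⟨fun _ => a, ha.1, ha.2.2.1, ?_, by omega⟩
    intro i hi
    interval_cases i
    exact ⟨ha.2.1, ha.2.2.2⟩
  · -- n ≥ 2
    have key : ∀ k, k ≤ n - 2 → ∃ f : ℕ → α,
        (f 0 ∈ M 0 ∧ f 0 ≠ cx ∧ f 0 ≠ c) ∧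
        (∀ i, 1 ≤ i → i ≤ k → f i ∈ M i ∧ f i ≠ c ∧ f i ≠ f (i-1)) := by
      intro k
      induction k with
      | zero =>
        intro _
        have hne : ((M 0 \ {cx, c})).Nonempty := by
          rw [← Finset.card_pos]
          have := FF.sdiff_pair_card (M 0) cx c (hM 0 (by omega))
          omega
        obtain ⟨a, ha⟩ := hne
        rw [Finset.mem_sdiff, Finset.mem_insert, Finset.mem_singleton] at ha
        push_neg at ha
        exact ⟨fun _ => a, ⟨ha.1, ha.2.1, ha.2.2⟩, fun i h1 h2 => by omega⟩
      | succ k ih =>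
        intro hk
        obtain ⟨f, hf0, hfk⟩ := ih (by omega)
        have hne : ((M (k+1) \ {c, f k})).Nonempty := by
          rw [← Finset.card_pos]
          have := FF.sdiff_pair_card (M (k+1)) c (f k) (hM (k+1) (by omega))
          omega
        obtain ⟨a, ha⟩ := hne
        rw [Finset.mem_sdiff, Finset.mem_insert, Finset.mem_singleton] at ha
        push_neg at ha
        refine ⟨fun i => if i = k + 1 then a else f i, ?_, ?_⟩
        · dsimp only
          rw [if_neg (by omega)]
          exact hf0
        · intro i h1 h2
          dsimp only
          rcases eq_or_lt_of_le h2 with hik | hik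
          · subst hik
            rw [if_pos rfl]
            have hk1 : k + 1 - 1 = k := by omega
            rw [hk1, if_neg (by omega)]
            exact ⟨ha.1, ha.2.1, ha.2.2⟩
          · have hik' : i ≤ k := by omega
            rw [if_neg (by omega), if_neg (by omega)]
            exact hfk i h1 hik'
    obtain ⟨f, hf0, hfk⟩ := key (n - 2) le_rfl
    have hne : (((M (n-1) \ {cz, c})).erase (f (n-2))).Nonempty := by
      rw [← Finset.card_pos]
      have := Finset.pred_card_le_card_erase (a := f (n-2)) (s := M (n-1) \ {cz, c})
      omega
    obtain ⟨a, ha⟩ := hne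
    rw [Finset.mem_erase, Finset.mem_sdiff, Finset.mem_insert, Finset.mem_singleton] at ha
    push_neg at ha
    refine ⟨fun i => if i = n - 1 then a else f i, ?_, ?_, ?_, ?_⟩
    · dsimp only; rw [if_neg (by omega)]; exact hf0.2.1
    · dsimp only; rw [if_pos rfl]; exact ha.2.2.1
    · intro i hi
      dsimp only
      by_cases hil : i = n - 1
      · rw [if_pos hil, hil]; exact ⟨ha.2.1, ha.2.2.2⟩
      · rw [if_neg hil]
        rcases Nat.eq_zero_or_pos i with h0 | h0
        · subst h0; exact ⟨hf0.1, hf0.2.2⟩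
        · have := hfk i h0 (by omega)
          exact ⟨this.1, this.2.1⟩
    · intro i hi
      dsimp only
      rcases eq_or_lt_of_le hi with h2' | h2'
      · have hi1 : i + 1 = n - 1 := by omega
        rw [if_pos hi1, if_neg (by omega)]
        have hie : i = n - 2 := by omega
        rw [hie]
        exact fun h => ha.1 h.symm
      · rw [if_neg (by omega), if_neg (by omega)]
        have h' := (hfk (i+1) (by omega) (by omega)).2.2
        simp only [Nat.add_sub_cancel] at h'
        exact fun h => h' h.symm

/-- Path coloring with slack at either end. -/
lemma FF.pathColor (n : ℕ) (hn : 1 ≤ n) (M : ℕ → Finset α)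
    (hM : ∀ i < n, 3 ≤ (M i).card) (c cx cz : α)
    (hslack : 2 ≤ ((M (n-1)) \ {cz, c}).card ∨ 2 ≤ ((M 0) \ {cx, c}).card) :
    ∃ f : ℕ → α, f 0 ≠ cx ∧ f (n-1) ≠ cz ∧
      (∀ i < n, f i ∈ M i ∧ f i ≠ c) ∧
      (∀ i, i + 2 ≤ n → f i ≠ f (i+1)) := by
  rcases hslack with hs | hs
  · exact FF.pathLR n hn M hM c cx cz hs
  · obtain ⟨f, h0, hl, hmem, hadj⟩ := FF.pathLR n hn (fun i => M (n-1-i))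
      (fun i hi => hM (n-1-i) (by omega)) c cz cx (by simpa using hs)
    refine ⟨fun i => f (n-1-i), ?_, ?_, ?_, ?_⟩
    · simpa using hl
    · simpa using h0
    · intro i hi
      show f (n-1-i) ∈ M i ∧ f (n-1-i) ≠ c
      have heq : n - 1 - (n - 1 - i) = i := by omega
      have h := hmem (n-1-i) (by omega)
      rwa [heq] at h
    · intro i hi
      show f (n-1-i) ≠ f (n-1-(i+1))
      have h1 : n - 1 - i = (n - 2 - i) + 1 := by omega
      have h2 : n - 1 - (i+1) = n - 2 - i := by omega
      rw [h1, h2]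
      exact fun h => hadj (n-2-i) (by omega) h.symm

/-- If some available apex color leaves slack at an end of the path,
the precoloring extends. -/
lemma FF.extend_of_slack {n : ℕ} (hn : 1 ≤ n) (L : FFVert n → Finset α)
    (hlist : ∀ i : Fin n, (L (FFVert.v i)).card = 3)
    (cx cy cz c : α) (hxy : cx ≠ cy) (hyz : cy ≠ cz)
    (hc : c ∈ L FFVert.apex) (hcx : c ≠ cx) (hcy : c ≠ cy) (hcz : c ≠ cz)
    (hslack : 2 ≤ ((L (FFVert.v ⟨n-1, by omega⟩)) \ {cz, c}).card ∨
              2 ≤ ((L (FFVert.v ⟨0, by omega⟩)) \ {cx, c}).card) :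
    ExtendsFF L cx cy cz := by
  set M : ℕ → Finset α := fun i => if h : i < n then L (FFVert.v ⟨i, h⟩) else ∅ with hMdef
  have hM : ∀ i < n, 3 ≤ (M i).card := by
    intro i hi
    simp only [hMdef, dif_pos hi]
    exact (hlist _).ge
  have hM0 : M 0 = L (FFVert.v ⟨0, by omega⟩) := by
    simp only [hMdef]
    rw [dif_pos (by omega)]
  have hMl : M (n-1) = L (FFVert.v ⟨n-1, by omega⟩) := by
    simp only [hMdef]
    rw [dif_pos (by omega)]
  obtain ⟨f, hf0, hfl, hmem, hadjf⟩ := FF.pathColor n hn M hM c cx cz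
    (by rw [hMl, hM0]; exact hslack)
  refine ⟨fun w => match w with
    | .x => cx | .y => cy | .z => cz | .apex => c | .v i => f i.val, ?_, rfl, rfl, rfl, ?_⟩
  · intro u w hadj
    rw [fatFan, SimpleGraph.fromEdgeSet_adj] at hadj
    obtain ⟨hmem', hne⟩ := hadj
    simp only [Set.mem_union, Set.mem_insert_iff, Set.mem_singleton_iff, Set.mem_setOf_eq,
      Sym2.eq_iff] at hmem'
    rcases hmem' with ((((h|h|h|h|h)|⟨i,h⟩)|⟨i,hi0,h⟩)|⟨i,j,hij,h⟩)|⟨i,hil,h⟩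
    · rcases h with ⟨rfl, rfl⟩ | ⟨rfl, rfl⟩
      · exact hxy
      · exact fun h => hxy h.symm
    · rcases h with ⟨rfl, rfl⟩ | ⟨rfl, rfl⟩
      · exact hyz
      · exact fun h => hyz h.symm
    · rcases h with ⟨rfl, rfl⟩ | ⟨rfl, rfl⟩
      · exact fun h => hcx h.symm
      · exact hcx
    · rcases h with ⟨rfl, rfl⟩ | ⟨rfl, rfl⟩
      · exact fun h => hcy h.symm
      · exact hcy
    · rcases h with ⟨rfl, rfl⟩ | ⟨rfl, rfl⟩
      · exact fun h => hcz h.symm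
      · exact hcz
    · rcases h with ⟨rfl, rfl⟩ | ⟨rfl, rfl⟩
      · exact fun h => (hmem i.val i.isLt).2 h.symm
      · exact (hmem i.val i.isLt).2
    · rcases h with ⟨rfl, rfl⟩ | ⟨rfl, rfl⟩
      · show cx ≠ f i.val
        rw [hi0]
        exact fun h => hf0 h.symm
      · show f i.val ≠ cx
        rw [hi0]
        exact hf0
    · rcases h with ⟨rfl, rfl⟩ | ⟨rfl, rfl⟩
      · show f i.val ≠ f j.val
        rw [← hij]
        exact hadjf i.val (by have := j.isLt; omega)
      · show f j.val ≠ f i.val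
        rw [← hij]
        exact fun h => hadjf i.val (by have := j.isLt; omega) h.symm
    · rcases h with ⟨rfl, rfl⟩ | ⟨rfl, rfl⟩
      · show f i.val ≠ cz
        rw [hil]
        exact hfl
      · show cz ≠ f i.val
        rw [hil]
        exact fun h => hfl h.symm
  · intro w h1 h2 h3
    match w with
    | .x => exact absurd rfl h1
    | .y => exact absurd rfl h2
    | .z => exact absurd rfl h3
    | .apex => exact hc
    | .v i =>
      have := (hmem i.val i.isLt).1
      rw [hMdef] at this
      simp only [dif_pos i.isLt] at this
      simpa using this

/-- Structure of a non-extendable precoloring. -/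
lemma FF.structure {n : ℕ} (hn : 1 ≤ n) (L : FFVert n → Finset α)
    (hapex : (L FFVert.apex).card = 5)
    (hlist : ∀ i : Fin n, (L (FFVert.v i)).card = 3)
    (cx cy cz : α) (hxy : cx ≠ cy) (hyz : cy ≠ cz)
    (hext : ¬ ExtendsFF L cx cy cz) :
    (L FFVert.apex \ {cx, cy, cz}) = (L (FFVert.v ⟨0, by omega⟩)).erase cx ∧
    (L FFVert.apex \ {cx, cy, cz}) = (L (FFVert.v ⟨n-1, by omega⟩)).erase cz ∧
    cx ∈ L (FFVert.v ⟨0, by omega⟩) ∧ cz ∈ L (FFVert.v ⟨n-1, by omega⟩) ∧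
    ({cx, cy, cz} : Finset α) ⊆ L FFVert.apex ∧
    ({cx, cy, cz} : Finset α).card = 3 := by
  set v0 : FFVert n := FFVert.v ⟨0, by omega⟩ with hv0
  set vl : FFVert n := FFVert.v ⟨n-1, by omega⟩ with hvl
  set A : Finset α := L FFVert.apex \ {cx, cy, cz} with hA
  have htri3 : ({cx, cy, cz} : Finset α).card ≤ 3 := by
    refine (Finset.card_insert_le _ _).trans ?_
    have := FF.pair_card_le cy cz
    omega
  have hcardA : 2 ≤ A.card := by
    have h1 := Finset.card_sdiff_add_card_inter (L FFVert.apex) ({cx, cy, cz} : Finset α)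
    have h2 : (L FFVert.apex ∩ {cx, cy, cz}).card ≤ ({cx, cy, cz} : Finset α).card :=
      Finset.card_le_card Finset.inter_subset_right
    rw [← hA] at h1
    omega
  have hstep : ∀ c ∈ A, cx ∈ L v0 ∧ c ∈ L v0 ∧ cz ∈ L vl ∧ c ∈ L vl := by
    intro c hcA
    rw [hA, Finset.mem_sdiff, Finset.mem_insert, Finset.mem_insert, Finset.mem_singleton] at hcA
    push_neg at hcA
    have hcap := hcA.1
    have hccx := hcA.2.1
    have hccy := hcA.2.2.1
    have hccz := hcA.2.2.2
    have hns : ¬(2 ≤ ((L vl) \ {cz, c}).card ∨ 2 ≤ ((L v0) \ {cx, c}).card) := by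
      intro hs
      exact hext (FF.extend_of_slack hn L hlist cx cy cz c hxy hyz hcap
        hccx hccy hccz hs)
    push_neg at hns
    obtain ⟨hns1, hns0⟩ := hns
    have gen : ∀ (s : Finset α) (a : α), s.card = 3 → (s \ {a, c}).card ≤ 1 →
        a ∈ s ∧ c ∈ s := by
      intro s a hs hle
      constructor
      · by_contra hnot
        have hsub : s ∩ {a, c} ⊆ {c} := by
          intro b hb
          rw [Finset.mem_inter, Finset.mem_insert, Finset.mem_singleton] at hb
          rw [Finset.mem_singleton]
          rcases hb.2 with h | h
          · exact absurd (h ▸ hb.1) hnot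
          · exact h
        have h1 := Finset.card_sdiff_add_card_inter s ({a, c} : Finset α)
        have h2 : (s ∩ {a, c}).card ≤ 1 := (Finset.card_le_card hsub).trans (by simp)
        omega
      · by_contra hnot
        have hsub : s ∩ {a, c} ⊆ {a} := by
          intro b hb
          rw [Finset.mem_inter, Finset.mem_insert, Finset.mem_singleton] at hb
          rw [Finset.mem_singleton]
          rcases hb.2 with h | h
          · exact h
          · exact absurd (h ▸ hb.1) hnot
        have h1 := Finset.card_sdiff_add_card_inter s ({a, c} : Finset α)
        have h2 : (s ∩ {a, c}).card ≤ 1 := (Finset.card_le_card hsub).trans (by simp)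
        omega
    obtain ⟨h1, h2⟩ := gen (L v0) cx (hlist _) (Nat.lt_succ_iff.mp hns0)
    obtain ⟨h3, h4⟩ := gen (L vl) cz (hlist _) (Nat.lt_succ_iff.mp hns1)
    exact ⟨h1, h2, h3, h4⟩
  -- A is contained in both erase sets
  have hcx0 : cx ∈ L v0 := by
    obtain ⟨c, hc⟩ := Finset.card_pos.mp (by omega : 0 < A.card)
    exact (hstep c hc).1
  have hczl : cz ∈ L vl := by
    obtain ⟨c, hc⟩ := Finset.card_pos.mp (by omega : 0 < A.card)
    exact (hstep c hc).2.2.1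
  have hsub0 : A ⊆ (L v0).erase cx := by
    intro c hc
    rw [Finset.mem_erase]
    have hcA := hc
    rw [hA, Finset.mem_sdiff, Finset.mem_insert, Finset.mem_insert, Finset.mem_singleton] at hcA
    push_neg at hcA
    exact ⟨hcA.2.1, (hstep c hc).2.1⟩
  have hsubl : A ⊆ (L vl).erase cz := by
    intro c hc
    rw [Finset.mem_erase]
    have hcA := hc
    rw [hA, Finset.mem_sdiff, Finset.mem_insert, Finset.mem_insert, Finset.mem_singleton] at hcA
    push_neg at hcA
    exact ⟨hcA.2.2.2, (hstep c hc).2.2.2⟩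
  have hcard0 : ((L v0).erase cx).card = 2 := by
    rw [Finset.card_erase_of_mem hcx0, hlist _]
  have hcardl : ((L vl).erase cz).card = 2 := by
    rw [Finset.card_erase_of_mem hczl, hlist _]
  have hA0 : A = (L v0).erase cx :=
    Finset.eq_of_subset_of_card_le hsub0 (by omega)
  have hAl : A = (L vl).erase cz :=
    Finset.eq_of_subset_of_card_le hsubl (by omega)
  have hcardA2 : A.card = 2 := by rw [hA0]; exact hcard0
  have hinter : (L FFVert.apex ∩ {cx, cy, cz}).card = 3 := by
    have h1 := Finset.card_sdiff_add_card_inter (L FFVert.apex) ({cx, cy, cz} : Finset α)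
    rw [← hA] at h1
    omega
  have hintereq : L FFVert.apex ∩ {cx, cy, cz} = {cx, cy, cz} :=
    Finset.eq_of_subset_of_card_le Finset.inter_subset_right (by omega)
  have hsubap : ({cx, cy, cz} : Finset α) ⊆ L FFVert.apex := by
    rw [← hintereq]
    exact Finset.inter_subset_left
  have htric : ({cx, cy, cz} : Finset α).card = 3 := by
    rw [← hintereq]; exact hinter
  exact ⟨hA0, hAl, hcx0, hczl, hsubap, htric⟩

end Aux

/-- For a fat fan with apex list of size `5` and path lists of size `3`,
at most one precoloring of the base fails to extend. -/
theorem fatFan_at_most_one_nonextendable {n : ℕ} {α : Type*}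
    (hn : 1 ≤ n) (L : FFVert n → Finset α)
    (hapex : (L FFVert.apex).card = 5)
    (hlist : ∀ i : Fin n, (L (FFVert.v i)).card = 3)
    (cx cy cz cx' cy' cz' : α)
    (hxy : cx ≠ cy) (hyz : cy ≠ cz) (hxy' : cx' ≠ cy') (hyz' : cy' ≠ cz')
    (hext : ¬ ExtendsFF L cx cy cz) (hext' : ¬ ExtendsFF L cx' cy' cz') :
    cx = cx' ∧ cy = cy' ∧ cz = cz' := by
  classical
  obtain ⟨hA0, hAl, hx1, hz1, hsub, hcard⟩ :=
    FF.structure hn L hapex hlist cx cy cz hxy hyz hext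
  obtain ⟨hA0', hAl', hx1', hz1', hsub', hcard'⟩ :=
    FF.structure hn L hapex hlist cx' cy' cz' hxy' hyz' hext'
  set v0 : FFVert n := FFVert.v ⟨0, by omega⟩ with hv0
  set vl : FFVert n := FFVert.v ⟨n-1, by omega⟩ with hvl
  -- distinctness from card = 3
  have distinct : ∀ a b c : α, ({a, b, c} : Finset α).card = 3 → a ≠ c := by
    intro a b c h hac
    subst hac
    have : ({a, b, a} : Finset α) = {a, b} := by
      ext u; simp; tauto
    rw [this] at h
    have := FF.pair_card_le a b
    omega
  have hxz : cx ≠ cz := distinct cx cy cz hcard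
  have hxz' : cx' ≠ cz' := distinct cx' cy' cz' hcard'
  -- step 1 : cx = cx'
  have hcxeq : cx = cx' := by
    by_contra hne
    have h1 : cx ∈ (L v0).erase cx' := Finset.mem_erase.mpr ⟨hne, hx1⟩
    rw [← hA0'] at h1
    have h2 : cx ∈ (L vl).erase cz' := by rw [← hAl']; exact h1
    have h3 : cx ∈ (L vl).erase cz :=
      Finset.mem_erase.mpr ⟨hxz, Finset.mem_of_mem_erase h2⟩
    rw [← hAl] at h3
    rw [Finset.mem_sdiff] at h3
    exact h3.2 (by simp)
  subst hcxeq
  have hAA' : (L FFVert.apex \ {cx, cy, cz}) = (L FFVert.apex \ {cx, cy', cz'}) := by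
    rw [hA0, hA0']
  -- step 2 : cz = cz'
  have hczeq : cz = cz' := by
    by_contra hne
    have h1 : cz ∈ (L vl).erase cz' := Finset.mem_erase.mpr ⟨hne, hz1⟩
    rw [← hAl', ← hAA', hAl] at h1
    exact (Finset.mem_erase.mp h1).1 rfl
  subst hczeq
  -- step 3 : cy = cy'
  refine ⟨rfl, ?_, rfl⟩
  have htris : ({cx, cy, cz} : Finset α) = ({cx, cy', cz} : Finset α) := by
    have e1 : L FFVert.apex \ (L FFVert.apex \ {cx, cy, cz}) = {cx, cy, cz} := by
      rw [Finset.sdiff_sdiff_self_left, Finset.inter_eq_right.mpr hsub]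
    have e2 : L FFVert.apex \ (L FFVert.apex \ {cx, cy', cz}) = {cx, cy', cz} := by
      rw [Finset.sdiff_sdiff_self_left, Finset.inter_eq_right.mpr hsub']
    rw [← e1, ← e2, hAA']
  have hcy : cy ∈ ({cx, cy', cz} : Finset α) := by
    rw [← htris]; simp
  rw [Finset.mem_insert, Finset.mem_insert, Finset.mem_singleton] at hcy
  rcases hcy with h | h | h
  · exact absurd h.symm hxy
  · exact h
  · exact absurd h hyz
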